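/- Let F be a field of characteristic zero, L a Lie algebra over F, and M a finite-dimensional Lie module over L. If the lattice of Lie submodules of M is finite and complemented, then M is a semisimple Lie module (every Lie submodule has a complementary Lie submodule and M is a sum of irreducible submodules), and no two distinct irreducible Lie submodules of M are isomorphic as Lie L-modules. -/

import Mathlib

/-- If the lattice of Lie submodules of a finite-dimensional Lie module `M` over a Lie
algebra over a field of characteristic zero is finite and complemented, then `M` is a
semisimple Lie module (it is the sum of its irreducible Lie submodules) and no two
distinct irreducible Lie submodules of `M` are isomorphic as Lie modules. -/
theorem semisimple_of_finite_complemented_lieSubmodule_lattice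
    (F : Type*) [Field F] [CharZero F]
    (L : Type*) [LieRing L] [LieAlgebra F L]
    (M : Type*) [AddCommGroup M] [Module F M] [FiniteDimensional F M]
    [LieRingModule L M] [LieModule F L M]
    [Finite (LieSubmodule F L M)] [ComplementedLattice (LieSubmodule F L M)] :
    (∀ N : LieSubmodule F L M, ∃ N' : LieSubmodule F L M, IsCompl N N') ∧
      sSup {N : LieSubmodule F L M | IsAtom N} = ⊤ ∧
      ∀ N N' : LieSubmodule F L M, IsAtom N → IsAtom N' → N ≠ N' →
        IsEmpty ((N : LieSubmodule F L M) ≃ₗ⁅F,L⁆ N') := by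
  have : IsCompactlyGenerated (LieSubmodule F L M) :=
    CompleteLattice.isCompactlyGenerated_of_wellFoundedGT
  refine ⟨fun N => exists_isCompl N, sSup_atoms_eq_top, ?_⟩
  intro N N' hN hN' hne
  constructor
  intro e
  -- pick a nonzero element of N
  obtain ⟨m0, hm0N, hm0⟩ : ∃ m ∈ N, m ≠ 0 := by
    by_contra h
    push_neg at h
    exact hN.1 ((LieSubmodule.eq_bot_iff N).mpr h)
  set x0 : N := ⟨m0, hm0N⟩ with hx0
  have hx0ne : x0 ≠ 0 := by
    intro h
    apply hm0
    simpa [hx0] using congrArg (Subtype.val) h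
  have he0 : e (0 : N) = 0 := by
    rw [← LieModuleEquiv.coe_toLieModuleHom]; exact map_zero _
  have hex0 : (e x0 : M) ≠ 0 := by
    intro h
    apply hx0ne
    apply e.injective
    have h2 : e x0 = 0 := Subtype.ext (by simpa using h)
    rw [h2, he0]
  -- the family of graphs
  set f : F → (N →ₗ⁅F,L⁆ M) :=
    fun c => N.incl + c • (N'.incl.comp e.toLieModuleHom) with hf
  have hfapp : ∀ (c : F) (x : N), f c x = (x : M) + c • (e x : M) := by
    intro c x
    simp [hf, LieModuleHom.smul_apply]
  have hdisj : Disjoint N N' := hN.disjoint_of_ne hN' hne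
  have hinj : Function.Injective (fun c => (f c).range) := by
    intro c c' hcc'
    have h1 : f c x0 ∈ (f c').range := by
      have hcc'' : (f c).range = (f c').range := hcc'
      rw [← hcc'']
      exact ⟨x0, rfl⟩
    obtain ⟨y, hy⟩ := h1
    rw [hfapp, hfapp] at hy
    -- (y : M) + c' • e y = x0 + c • e x0
    have hmemN : (y : M) - (x0 : M) ∈ N := N.sub_mem y.2 x0.2
    have heq : (y : M) - (x0 : M) = c • (e x0 : M) - c' • (e y : M) := by
      have := hy
      abel_nf
      linear_combination (norm := module) this
    have hmemN' : (y : M) - (x0 : M) ∈ N' := by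
      rw [heq]
      exact N'.sub_mem (N'.smul_mem c (e x0).2) (N'.smul_mem c' (e y).2)
    have hzero : (y : M) - (x0 : M) = 0 := by
      have := hdisj.le_bot ⟨hmemN, hmemN'⟩
      simpa using this
    have hyx : y = x0 := Subtype.ext (by
      have : (y : M) = (x0 : M) := by linear_combination (norm := module) hzero
      exact this)
    have : c • (e x0 : M) = c' • (e x0 : M) := by
      rw [hyx] at hy
      linear_combination (norm := module) -hy
    have : (c - c') • (e x0 : M) = 0 := by
      rw [sub_smul, this]
      simp
    rcases smul_eq_zero.mp this with h | h
    · exact sub_eq_zero.mp h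
    · exact absurd h hex0
  haveI : Finite F := Finite.of_injective _ hinj
  exact not_finite F
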